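/- arXiv:2002.09615 — 2 statements merged into one kernel-verified Lean document; each statement's English description precedes it below -/
import Mathlib

section
/- Let U be a d × n real matrix whose columns sum to the zero vector, let P = {(i,j) : 1 ≤ i < j ≤ n}, and let ν ≥ max_{(i,j) ∈ P} ‖U_i − U_j‖_2^2. Then the largest eigenvalue of the real symmetric matrix (1 / C(n,2)) · Σ_{(i,j) ∈ P} ‖U_i − U_j‖_2^2 · (U_i − U_j)(U_i − U_j)^T − (n / C(n,2))^2 · (U U^T)^2 is at most (ν n / C(n,2)) · λ_max(U U^T) + (n^2 / C(n,2)^2) · λ_max(U U^T)^2, where λ_max denotes the largest eigenvalue and C(n,2) = n(n−1)/2. -/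
open Matrix BigOperators Finset

/-- Rayleigh quotient at an eigenvector equals the eigenvalue (real case). -/
lemma stmt4_eig_eq_quad {d : ℕ} {A : Matrix (Fin d) (Fin d) ℝ} (hA : A.IsHermitian) (i : Fin d) :
    hA.eigenvalues i = (⇑(hA.eigenvectorBasis i)) ⬝ᵥ (A *ᵥ ⇑(hA.eigenvectorBasis i)) := by
  simpa using hA.eigenvalues_eq i

/-- Eigenvectors are unit vectors. -/
lemma stmt4_eigvec_unit {d : ℕ} {A : Matrix (Fin d) (Fin d) ℝ} (hA : A.IsHermitian) (i : Fin d) :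
    (⇑(hA.eigenvectorBasis i)) ⬝ᵥ (⇑(hA.eigenvectorBasis i)) = 1 := by
  have h := hA.eigenvectorBasis.orthonormal.1 i
  have h2 : (inner ℝ (hA.eigenvectorBasis i) (hA.eigenvectorBasis i) : ℝ) = 1 := by
    rw [real_inner_self_eq_norm_mul_norm, h, one_mul]
  rw [← h2]
  simp only [PiLp.inner_apply, dotProduct, RCLike.inner_apply, conj_trivial, mul_comm]

/-- Quadratic form is bounded by the largest eigenvalue times the squared norm. -/
lemma stmt4_quad_le_iSup {d : ℕ} {A : Matrix (Fin d) (Fin d) ℝ} (hA : A.IsHermitian)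
    (x : Fin d → ℝ) :
    x ⬝ᵥ (A *ᵥ x) ≤ (⨆ i, hA.eigenvalues i) * (x ⬝ᵥ x) := by
  classical
  set V : Matrix (Fin d) (Fin d) ℝ := (hA.eigenvectorUnitary : Matrix (Fin d) (Fin d) ℝ) with hV
  set y : Fin d → ℝ := (star V) *ᵥ x with hy
  have hxV : x ᵥ* V = y := by
    rw [hy, Matrix.star_eq_conjTranspose]
    simp [← Matrix.vecMul_transpose]
  have hyy : y ⬝ᵥ y = x ⬝ᵥ x := by
    have hVV : V * star V = 1 := (Matrix.mem_unitaryGroup_iff).mp hA.eigenvectorUnitary.2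
    calc y ⬝ᵥ y = (x ᵥ* V) ⬝ᵥ ((star V) *ᵥ x) := by rw [hxV]
    _ = x ⬝ᵥ ((V * star V) *ᵥ x) := by rw [← dotProduct_mulVec, ← mulVec_mulVec]
    _ = x ⬝ᵥ x := by rw [hVV, one_mulVec]
  have hquad : x ⬝ᵥ (A *ᵥ x) = ∑ j, hA.eigenvalues j * (y j)^2 := by
    conv_lhs => rw [hA.spectral_theorem, Unitary.conjStarAlgAut_apply]
    rw [← hV]
    rw [mul_assoc, ← mulVec_mulVec, dotProduct_mulVec, hxV, ← mulVec_mulVec, ← hy]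
    simp [mulVec_diagonal, dotProduct, Function.comp]
    exact Finset.sum_congr rfl fun j _ => by ring
  rw [hquad, ← hyy]
  have hb : ∀ j, hA.eigenvalues j * (y j)^2 ≤ (⨆ k, hA.eigenvalues k) * (y j)^2 := fun j =>
    mul_le_mul_of_nonneg_right (le_ciSup (Finite.bddAbove_range _) j) (sq_nonneg _)
  calc ∑ j, hA.eigenvalues j * (y j)^2 ≤ ∑ j, (⨆ k, hA.eigenvalues k) * (y j)^2 :=
        Finset.sum_le_sum fun j _ => hb j
    _ = (⨆ k, hA.eigenvalues k) * (y ⬝ᵥ y) := by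
        rw [← Finset.mul_sum]; congr 1; simp [dotProduct, sq]

/-- A sum of matrices applied to a vector. -/
lemma stmt4_sum_mulVec {d n : ℕ} {ι : Type*} (s : Finset ι)
    (M : ι → Matrix (Fin d) (Fin n) ℝ) (v : Fin n → ℝ) :
    (∑ p ∈ s, M p) *ᵥ v = ∑ p ∈ s, (M p *ᵥ v) := by
  ext k
  simp only [mulVec, dotProduct, Finset.sum_apply, Matrix.sum_apply, Finset.sum_mul]
  exact Finset.sum_comm

lemma stmt4_dotProduct_sum {d : ℕ} {ι : Type*} (s : Finset ι) (v : Fin d → ℝ)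
    (w : ι → (Fin d → ℝ)) : v ⬝ᵥ (∑ p ∈ s, w p) = ∑ p ∈ s, v ⬝ᵥ w p := by
  simp only [dotProduct, Finset.sum_apply, Finset.mul_sum]
  exact Finset.sum_comm

lemma stmt4_vecMulVec_mulVec {d : ℕ} (a b v : Fin d → ℝ) :
    (vecMulVec a b) *ᵥ v = (b ⬝ᵥ v) • a := by
  ext k
  simp [mulVec, vecMulVec_apply, dotProduct, Finset.mul_sum, Pi.smul_apply, smul_eq_mul]
  rw [Finset.sum_mul]
  exact Finset.sum_congr rfl fun j _ => by ring

/-- Centering identity: `∑_{i<j} (f i − f j)² = n ∑ f²` when `∑ f = 0`. -/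
lemma stmt4_center {n : ℕ} (f : Fin n → ℝ) (hf : ∑ i, f i = 0) :
    ∑ p ∈ Finset.univ.filter (fun p : Fin n × Fin n => p.1 < p.2), (f p.1 - f p.2)^2
      = n * ∑ i, (f i)^2 := by
  classical
  have huniv : ∑ p : Fin n × Fin n, (f p.1 - f p.2)^2 = 2 * n * ∑ k, (f k)^2 := by
    rw [Fintype.sum_prod_type]
    have h1 : ∀ i : Fin n, ∑ j, (f i - f j)^2 = (n : ℝ) * f i^2 + ∑ j, f j^2 := by
      intro i
      have expand : ∀ j, (f i - f j)^2 = f i^2 - 2 * f i * f j + f j^2 := fun j => by ring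
      rw [Finset.sum_congr rfl fun j _ => expand j, Finset.sum_add_distrib,
        Finset.sum_sub_distrib, ← Finset.mul_sum, hf, mul_zero, sub_zero,
        Finset.sum_const, Finset.card_univ, Fintype.card_fin, nsmul_eq_mul]
    rw [Finset.sum_congr rfl fun i _ => h1 i, Finset.sum_add_distrib, ← Finset.mul_sum,
      Finset.sum_const, Finset.card_univ, Fintype.card_fin, nsmul_eq_mul]
    ring
  have hswap : ∑ p ∈ Finset.univ.filter (fun p : Fin n × Fin n => p.1 < p.2), (f p.1 - f p.2)^2
      = ∑ p ∈ Finset.univ.filter (fun p : Fin n × Fin n => p.2 < p.1), (f p.1 - f p.2)^2 := by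
    apply Finset.sum_nbij' (fun p => (p.2, p.1)) (fun p => (p.2, p.1)) <;>
      simp +contextual [Prod.ext_iff]
    intro a b _
    ring
  have h1 := Finset.sum_filter_add_sum_filter_not Finset.univ
    (fun p : Fin n × Fin n => p.1 < p.2) (fun p => (f p.1 - f p.2)^2)
  have h2 := Finset.sum_filter_add_sum_filter_not
    (Finset.univ.filter (fun p : Fin n × Fin n => ¬ p.1 < p.2))
    (fun p : Fin n × Fin n => p.2 < p.1) (fun p => (f p.1 - f p.2)^2)
  have e1 : (Finset.univ.filter (fun p : Fin n × Fin n => ¬ p.1 < p.2)).filter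
      (fun p : Fin n × Fin n => p.2 < p.1)
      = Finset.univ.filter (fun p : Fin n × Fin n => p.2 < p.1) := by
    ext p
    simp only [Finset.mem_filter, Finset.mem_univ, true_and]
    constructor
    · exact fun h => h.2
    · exact fun h => ⟨asymm h, h⟩
  have e2 : ∑ p ∈ (Finset.univ.filter (fun p : Fin n × Fin n => ¬ p.1 < p.2)).filter
      (fun p : Fin n × Fin n => ¬ p.2 < p.1), (f p.1 - f p.2)^2 = 0 := by
    apply Finset.sum_eq_zero
    intro p hp
    simp only [Finset.mem_filter, Finset.mem_univ, true_and] at hp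
    have : p.1 = p.2 := le_antisymm (not_lt.1 hp.2) (not_lt.1 hp.1)
    rw [this]; ring
  rw [e1, e2, add_zero] at h2
  rw [← h2, ← hswap] at h1
  linarith [h1, huniv]

/-- For centered `U` with `‖U_i − U_j‖₂² ≤ ν` on all pairs, the largest
eigenvalue of `(1/C(n,2)) Σ_{i<j} ‖U_i−U_j‖₂² (U_i−U_j)(U_i−U_j)ᵀ − (n/C(n,2))²·(U Uᵀ)²`
is at most `(νn/C(n,2))·λ_max(U Uᵀ) + (n²/C(n,2)²)·λ_max(U Uᵀ)²`. -/
theorem stmt4 {d n : ℕ} (U : Matrix (Fin d) (Fin n) ℝ) (ν : ℝ)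
    (hU : ∑ j : Fin n, (fun i => U i j) = (0 : Fin d → ℝ))
    (hν : ∀ p : Fin n × Fin n, p.1 < p.2 → ∑ i, (U i p.1 - U i p.2) ^ 2 ≤ ν)
    (hM : (((n.choose 2 : ℝ))⁻¹ •
        (∑ p ∈ Finset.univ.filter (fun p : Fin n × Fin n => p.1 < p.2),
          (∑ i, (U i p.1 - U i p.2) ^ 2) •
            vecMulVec ((fun i => U i p.1) - fun i => U i p.2)
              ((fun i => U i p.1) - fun i => U i p.2))
      - ((n : ℝ) / (n.choose 2 : ℝ)) ^ 2 • (U * Uᵀ * (U * Uᵀ))).IsHermitian)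
    (hUU : (U * Uᵀ).IsHermitian) :
    (⨆ i, hM.eigenvalues i)
      ≤ ν * (n : ℝ) / (n.choose 2 : ℝ) * (⨆ i, hUU.eigenvalues i)
        + (n : ℝ) ^ 2 / (n.choose 2 : ℝ) ^ 2 * (⨆ i, hUU.eigenvalues i) ^ 2 := by
  classical
  rcases isEmpty_or_nonempty (Fin d) with hd | hd
  · simp [Real.iSup_of_isEmpty]
  apply ciSup_le
  intro i
  set v : Fin d → ℝ := ⇑(hM.eigenvectorBasis i) with hv
  have hv1 : v ⬝ᵥ v = 1 := stmt4_eigvec_unit hM i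
  set L : ℝ := ⨆ k, hUU.eigenvalues k with hL
  set f : Fin n → ℝ := fun j => ∑ k, U k j * v k with hf
  -- column sums vanish
  have hfs : ∑ j, f j = 0 := by
    rw [Finset.sum_comm]
    have : ∀ k, ∑ j, U k j * v k = 0 := by
      intro k
      rw [← Finset.sum_mul]
      have := congrFun hU k
      simp only [Finset.sum_apply, Pi.zero_apply] at this
      rw [this, zero_mul]
    simp [this]
  -- quadratic form of U*Uᵀ
  have hB : v ⬝ᵥ ((U * Uᵀ) *ᵥ v) = ∑ j, (f j)^2 := by
    rw [← mulVec_mulVec, dotProduct_mulVec]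
    have : v ᵥ* U = Uᵀ *ᵥ v := by rw [← Matrix.transpose_transpose U, vecMul_transpose,
      Matrix.transpose_transpose]
    rw [this]
    simp [dotProduct, mulVec, hf, sq, mul_comm]
  -- quadratic form of (U*Uᵀ)²  is nonnegative
  have hBB : 0 ≤ v ⬝ᵥ ((U * Uᵀ * (U * Uᵀ)) *ᵥ v) := by
    rw [← mulVec_mulVec, dotProduct_mulVec]
    have ht : (U * Uᵀ)ᵀ = U * Uᵀ := by
      have := hUU.eq
      rwa [Matrix.conjTranspose_eq_transpose_of_trivial] at this
    have : v ᵥ* (U * Uᵀ) = (U * Uᵀ) *ᵥ v := by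
      conv_lhs => rw [← ht]
      rw [vecMul_transpose]
    rw [this]
    exact Finset.sum_nonneg fun j _ => mul_self_nonneg _
  -- quadratic form of M
  have hq : v ⬝ᵥ ((((n.choose 2 : ℝ))⁻¹ •
        (∑ p ∈ Finset.univ.filter (fun p : Fin n × Fin n => p.1 < p.2),
          (∑ i, (U i p.1 - U i p.2) ^ 2) •
            vecMulVec ((fun i => U i p.1) - fun i => U i p.2)
              ((fun i => U i p.1) - fun i => U i p.2))
      - ((n : ℝ) / (n.choose 2 : ℝ)) ^ 2 • (U * Uᵀ * (U * Uᵀ))) *ᵥ v)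
      = ((n.choose 2 : ℝ))⁻¹ * (∑ p ∈ Finset.univ.filter (fun p : Fin n × Fin n => p.1 < p.2),
          (∑ i, (U i p.1 - U i p.2) ^ 2) * (f p.1 - f p.2)^2)
        - ((n : ℝ) / (n.choose 2 : ℝ)) ^ 2 * (v ⬝ᵥ ((U * Uᵀ * (U * Uᵀ)) *ᵥ v)) := by
    rw [sub_mulVec, smul_mulVec, smul_mulVec, dotProduct_sub, dotProduct_smul,
      dotProduct_smul, smul_eq_mul, smul_eq_mul, stmt4_sum_mulVec, stmt4_dotProduct_sum]
    congr 2
    apply Finset.sum_congr rfl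
    intro p _
    rw [smul_mulVec, dotProduct_smul, stmt4_vecMulVec_mulVec, dotProduct_smul,
      smul_eq_mul, smul_eq_mul]
    have ha : ((fun i => U i p.1) - fun i => U i p.2) ⬝ᵥ v = f p.1 - f p.2 := by
      simp [dotProduct, hf, sub_mul, Finset.sum_sub_distrib]
    rw [ha, dotProduct_comm, ha, sq]
  rw [stmt4_eig_eq_quad hM i, hq]
  -- bound the weighted sum by ν times the unweighted sum
  have hwsum : (∑ p ∈ Finset.univ.filter (fun p : Fin n × Fin n => p.1 < p.2),
          (∑ i, (U i p.1 - U i p.2) ^ 2) * (f p.1 - f p.2)^2)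
      ≤ ν * ((n : ℝ) * ∑ j, (f j)^2) := by
    calc (∑ p ∈ Finset.univ.filter (fun p : Fin n × Fin n => p.1 < p.2),
          (∑ i, (U i p.1 - U i p.2) ^ 2) * (f p.1 - f p.2)^2)
        ≤ ∑ p ∈ Finset.univ.filter (fun p : Fin n × Fin n => p.1 < p.2),
          ν * (f p.1 - f p.2)^2 := by
          apply Finset.sum_le_sum
          intro p hp
          simp only [Finset.mem_filter, Finset.mem_univ, true_and] at hp
          exact mul_le_mul_of_nonneg_right (hν p hp) (sq_nonneg _)
      _ = ν * ((n : ℝ) * ∑ j, (f j)^2) := by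
          rw [← Finset.mul_sum, stmt4_center f hfs]
  rcases lt_or_ge n 2 with hn | hn
  · -- degenerate case: C(n,2) = 0
    have hC0 : ((n.choose 2 : ℕ) : ℝ) = 0 := by
      norm_cast
      exact Nat.choose_eq_zero_of_lt hn
    rw [hC0]
    simp only [_root_.inv_zero, zero_mul, div_zero, ne_eq, zero_pow, OfNat.ofNat_ne_zero,
      not_false_iff, zero_sub, add_zero, zero_add, mul_zero, neg_nonpos]
    norm_num
  · -- main case: n ≥ 2
    have hν0 : 0 ≤ ν := le_trans (Finset.sum_nonneg fun k _ => sq_nonneg _)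
      (hν (⟨0, by omega⟩, ⟨1, by omega⟩) (by simp [Fin.lt_def]))
    have hC0 : (0:ℝ) < ((n.choose 2 : ℕ) : ℝ) := by
      exact_mod_cast Nat.choose_pos hn
    have hf2L : ∑ j, (f j)^2 ≤ L := by
      have := stmt4_quad_le_iSup hUU v
      rw [hB, hv1, mul_one] at this
      exact this
    have hstep : ((n.choose 2 : ℝ))⁻¹ * (∑ p ∈ Finset.univ.filter (fun p : Fin n × Fin n => p.1 < p.2),
          (∑ i, (U i p.1 - U i p.2) ^ 2) * (f p.1 - f p.2)^2)
        ≤ ν * (n : ℝ) / (n.choose 2 : ℝ) * L := by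
      calc ((n.choose 2 : ℝ))⁻¹ * (∑ p ∈ Finset.univ.filter (fun p : Fin n × Fin n => p.1 < p.2),
            (∑ i, (U i p.1 - U i p.2) ^ 2) * (f p.1 - f p.2)^2)
          ≤ ((n.choose 2 : ℝ))⁻¹ * (ν * ((n : ℝ) * ∑ j, (f j)^2)) :=
            mul_le_mul_of_nonneg_left hwsum (inv_nonneg.2 hC0.le)
        _ ≤ ((n.choose 2 : ℝ))⁻¹ * (ν * ((n : ℝ) * L)) := by
            apply mul_le_mul_of_nonneg_left _ (inv_nonneg.2 hC0.le)
            apply mul_le_mul_of_nonneg_left _ hν0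
            exact mul_le_mul_of_nonneg_left hf2L (Nat.cast_nonneg n)
        _ = ν * (n : ℝ) / (n.choose 2 : ℝ) * L := by field_simp
    have hterm2 : 0 ≤ (n : ℝ)^2 / (n.choose 2 : ℝ)^2 * L^2 :=
      mul_nonneg (div_nonneg (sq_nonneg _) (sq_nonneg _)) (sq_nonneg _)
    have hsub : ((n : ℝ) / (n.choose 2 : ℝ)) ^ 2 * (v ⬝ᵥ ((U * Uᵀ * (U * Uᵀ)) *ᵥ v)) ≥ 0 :=
      mul_nonneg (sq_nonneg _) hBB
    linarith
end

section
/- Let U be a d × n real matrix whose columns sum to the zero vector, let P = {(i,j) : 1 ≤ i < j ≤ n}, and suppose ‖U_i − U_j‖_2^2 ≤ ν for all (i,j) ∈ P. Then the largest eigenvalue of the real symmetric positive semidefinite matrix (1 / C(n,2)) · Σ_{(i,j) ∈ P} ‖U_i − U_j‖_2^2 · (U_i − U_j)(U_i − U_j)^T is at most (ν n / C(n,2)) · λ_max(U U^T), where λ_max denotes the largest eigenvalue and C(n,2) = n(n−1)/2. -/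
open Matrix BigOperators Finset

lemma quad_le_top_eig {m : ℕ} {A : Matrix (Fin m) (Fin m) ℝ} (hA : A.IsHermitian)
    (x : Fin m → ℝ) : x ⬝ᵥ A *ᵥ x ≤ (⨆ i, hA.eigenvalues i) * (x ⬝ᵥ x) := by
  set Uu : Matrix (Fin m) (Fin m) ℝ := (hA.eigenvectorUnitary : Matrix (Fin m) (Fin m) ℝ) with hUu
  have hspec := hA.spectral_theorem
  set y : Fin m → ℝ := Uuᵀ *ᵥ x with hy
  have hstar : star Uu = Uuᵀ := by
    rw [Matrix.star_eq_conjTranspose]; ext i j; simp [Matrix.conjTranspose_apply]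
  have hdiag : Matrix.diagonal (RCLike.ofReal ∘ hA.eigenvalues) = Matrix.diagonal hA.eigenvalues := by
    congr 1
  have h1 : x ⬝ᵥ A *ᵥ x = y ⬝ᵥ (diagonal hA.eigenvalues) *ᵥ y := by
    conv_lhs => rw [hspec]
    simp only [Unitary.conjStarAlgAut_apply, Unitary.coe_star]
    rw [hstar, hdiag, ← Matrix.mulVec_mulVec, ← Matrix.mulVec_mulVec,
      Matrix.dotProduct_mulVec x Uu, ← Matrix.mulVec_transpose]
  have h2 : y ⬝ᵥ y = x ⬝ᵥ x := by
    have hu : Uu * star Uu = 1 := Matrix.mem_unitaryGroup_iff.mp hA.eigenvectorUnitary.2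
    conv_lhs => rw [hy, Matrix.mulVec_transpose]
    rw [← Matrix.dotProduct_mulVec, ← Matrix.mulVec_transpose, Matrix.mulVec_mulVec,
      ← hstar, hu, Matrix.one_mulVec]
  have h3 : y ⬝ᵥ (diagonal hA.eigenvalues) *ᵥ y = ∑ i, hA.eigenvalues i * (y i)^2 := by
    simp only [dotProduct, Matrix.mulVec_diagonal]
    exact Finset.sum_congr rfl fun i _ => by ring
  have hbdd : ∀ i, hA.eigenvalues i ≤ ⨆ j, hA.eigenvalues j := fun i =>
    le_ciSup (Set.Finite.bddAbove (Set.finite_range _)) i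
  calc x ⬝ᵥ A *ᵥ x = ∑ i, hA.eigenvalues i * (y i)^2 := by rw [h1, h3]
    _ ≤ ∑ i, (⨆ j, hA.eigenvalues j) * (y i)^2 :=
        Finset.sum_le_sum fun i _ => mul_le_mul_of_nonneg_right (hbdd i) (sq_nonneg _)
    _ = (⨆ j, hA.eigenvalues j) * (y ⬝ᵥ y) := by
        rw [← Finset.mul_sum]; congr 1; simp [dotProduct, sq]
    _ = _ := by rw [h2]

-- eigenvector as a plain vector: unit dot and eigenvalue = quadratic form
lemma eig_eq_quad {m : ℕ} {A : Matrix (Fin m) (Fin m) ℝ} (hA : A.IsHermitian) (i : Fin m) :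
    hA.eigenvalues i = (⇑(hA.eigenvectorBasis i) : Fin m → ℝ) ⬝ᵥ A *ᵥ ⇑(hA.eigenvectorBasis i) := by
  have := hA.eigenvalues_eq i
  simpa using this

lemma eigvec_unit {m : ℕ} {A : Matrix (Fin m) (Fin m) ℝ} (hA : A.IsHermitian) (i : Fin m) :
    (⇑(hA.eigenvectorBasis i) : Fin m → ℝ) ⬝ᵥ ⇑(hA.eigenvectorBasis i) = 1 := by
  have h := hA.eigenvectorBasis.orthonormal.1 i
  have h2 : (inner ℝ (hA.eigenvectorBasis i) (hA.eigenvectorBasis i) : ℝ) = 1 := by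
    rw [real_inner_self_eq_norm_sq, h]; norm_num
  rw [← h2]
  simp only [PiLp.inner_apply, dotProduct, mul_comm, RCLike.inner_apply, conj_trivial]

lemma dot_vecMulVec {d : ℕ} (u z : Fin d → ℝ) :
    z ⬝ᵥ (vecMulVec u u) *ᵥ z = (u ⬝ᵥ z)^2 := by
  rw [sq]
  simp only [dotProduct, Matrix.mulVec, Matrix.vecMulVec_apply,
    Finset.mul_sum, Finset.sum_mul]
  exact Finset.sum_congr rfl fun i _ => Finset.sum_congr rfl fun j _ => by ring

lemma sum_mulVec' {d : ℕ} {ι : Type*} (s : Finset ι) (f : ι → Matrix (Fin d) (Fin d) ℝ)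
    (z : Fin d → ℝ) : (∑ p ∈ s, f p) *ᵥ z = ∑ p ∈ s, (f p) *ᵥ z := by
  ext i
  simp only [Matrix.mulVec, dotProduct, Matrix.sum_apply, Finset.sum_apply,
    Finset.sum_mul]
  exact Finset.sum_comm

lemma dot_sum' {d : ℕ} {ι : Type*} (s : Finset ι) (z : Fin d → ℝ) (v : ι → Fin d → ℝ) :
    z ⬝ᵥ (∑ p ∈ s, v p) = ∑ p ∈ s, z ⬝ᵥ v p := by
  simp only [dotProduct, Finset.sum_apply, Finset.mul_sum]
  exact Finset.sum_comm

lemma pair_sum_id {n : ℕ} (a : Fin n → ℝ) (ha : ∑ j, a j = 0) :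
    ∑ p ∈ Finset.univ.filter (fun p : Fin n × Fin n => p.1 < p.2), (a p.1 - a p.2)^2
      = n * ∑ j, (a j)^2 := by
  have e1 : ∀ i, ∑ j, (a i - a j)^2 = n * a i^2 - 2*a i*(∑ j, a j) + ∑ j, (a j)^2 := by
    intro i
    have h : ∀ j, (a i - a j)^2 = a i^2 - 2*a i*a j + (a j)^2 := fun j => by ring
    simp_rw [h]
    rw [Finset.sum_add_distrib, Finset.sum_sub_distrib, Finset.sum_const, Finset.card_univ,
      Fintype.card_fin, ← Finset.mul_sum, nsmul_eq_mul]
  have eS : ∑ p ∈ (Finset.univ : Finset (Fin n × Fin n)), (a p.1 - a p.2)^2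
      = 2 * (n * ∑ j, (a j)^2) := by
    rw [← Finset.univ_product_univ, Finset.sum_product]
    simp_rw [e1, ha, mul_zero, sub_zero]
    rw [Finset.sum_add_distrib, Finset.sum_const, Finset.card_univ, Fintype.card_fin,
      ← Finset.mul_sum, nsmul_eq_mul]
    ring
  have hsplit := Finset.sum_filter_add_sum_filter_not (Finset.univ : Finset (Fin n × Fin n))
    (fun p => p.1 < p.2) (fun p => (a p.1 - a p.2)^2)
  have hgt : ∑ p ∈ Finset.univ.filter (fun p : Fin n × Fin n => ¬ p.1 < p.2), (a p.1 - a p.2)^2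
      = ∑ p ∈ Finset.univ.filter (fun p : Fin n × Fin n => p.2 < p.1), (a p.1 - a p.2)^2 := by
    refine (Finset.sum_subset ?_ ?_).symm
    · intro p hp
      simp only [Finset.mem_filter, Finset.mem_univ, true_and] at *
      exact fun h => absurd hp (lt_asymm h)
    · intro p hp hnp
      simp only [Finset.mem_filter, Finset.mem_univ, true_and, not_lt] at hp hnp
      have : p.1 = p.2 := le_antisymm (not_lt.mp (by simpa using hnp)) hp
      rw [this]; ring
  have hswap : ∑ p ∈ Finset.univ.filter (fun p : Fin n × Fin n => p.2 < p.1), (a p.1 - a p.2)^2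
      = ∑ p ∈ Finset.univ.filter (fun p : Fin n × Fin n => p.1 < p.2), (a p.1 - a p.2)^2 := by
    refine Finset.sum_nbij' (fun p => p.swap) (fun p => p.swap) ?_ ?_ ?_ ?_ ?_
    · intro p hp; simp only [Finset.mem_filter, Finset.mem_univ, true_and] at *; exact hp
    · intro p hp; simp only [Finset.mem_filter, Finset.mem_univ, true_and] at *; exact hp
    · intro p _; exact Prod.swap_swap p
    · intro p _; exact Prod.swap_swap p
    · intro p _; simp [Prod.fst_swap, Prod.snd_swap]; ring
  rw [hgt, hswap, eS] at hsplit
  linarith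

lemma stmt12_aux {d n : ℕ} (U : Matrix (Fin d) (Fin n) ℝ) (ν : ℝ)
    (hU : ∑ j : Fin n, (fun i => U i j) = (0 : Fin d → ℝ))
    (hν : ∀ p : Fin n × Fin n, p.1 < p.2 → ∑ i, (U i p.1 - U i p.2) ^ 2 ≤ ν)
    {A : Matrix (Fin d) (Fin d) ℝ}
    (hAeq : A = ((n.choose 2 : ℝ))⁻¹ •
        ∑ p ∈ Finset.univ.filter (fun p : Fin n × Fin n => p.1 < p.2),
          (∑ i, (U i p.1 - U i p.2) ^ 2) •
            vecMulVec ((fun i => U i p.1) - fun i => U i p.2)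
              ((fun i => U i p.1) - fun i => U i p.2))
    (hA : A.IsHermitian)
    (hUU : (U * Uᵀ).IsHermitian) :
    (⨆ i, hA.eigenvalues i)
      ≤ ν * (n : ℝ) / (n.choose 2 : ℝ) * ⨆ i, hUU.eigenvalues i := by
  classical
  set C : ℝ := (n.choose 2 : ℝ) with hCdef
  set Ps := Finset.univ.filter (fun p : Fin n × Fin n => p.1 < p.2) with hPs
  set w : Fin n × Fin n → ℝ := fun p => ∑ i, (U i p.1 - U i p.2) ^ 2 with hw
  set u : Fin n × Fin n → (Fin d → ℝ) :=
    fun p => (fun i => U i p.1) - fun i => U i p.2 with hu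
  have key : ∀ z : Fin d → ℝ, z ⬝ᵥ A *ᵥ z = C⁻¹ * ∑ p ∈ Ps, w p * ((u p) ⬝ᵥ z)^2 := by
    intro z
    rw [hAeq, Matrix.smul_mulVec, dotProduct_smul, smul_eq_mul, sum_mulVec',
      dot_sum']
    congr 1
    refine Finset.sum_congr rfl fun p _ => ?_
    rw [Matrix.smul_mulVec, dotProduct_smul, smul_eq_mul, dot_vecMulVec]
  by_cases hC : C = 0
  · -- degenerate case : n ≤ 1
    have heig0 : ∀ i, hA.eigenvalues i = 0 := by
      intro i
      rw [eig_eq_quad hA i, key, hC, _root_.inv_zero, zero_mul]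
    rw [show ν * (n : ℝ) / C * ⨆ i, hUU.eigenvalues i = 0 by rw [hC, div_zero, zero_mul]]
    rcases isEmpty_or_nonempty (Fin d) with hd | hd
    · simp
    · exact ciSup_le fun i => le_of_eq (heig0 i)
  · have hchoose_pos : 0 < n.choose 2 := Nat.pos_of_ne_zero (by
      intro h; exact hC (by rw [hCdef, h, Nat.cast_zero]))
    have hCpos : 0 < C := by rw [hCdef]; exact_mod_cast hchoose_pos
    have hn2 : 2 ≤ n := by
      by_contra h
      exact absurd (Nat.choose_eq_zero_of_lt (not_le.mp h)) hchoose_pos.ne'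
    have h01 : (⟨0, by omega⟩ : Fin n) < (⟨1, by omega⟩ : Fin n) := by
      simp [Fin.lt_def]
    have hν0 : 0 ≤ ν :=
      le_trans (Finset.sum_nonneg fun i _ => sq_nonneg _) (hν (⟨0, by omega⟩, ⟨1, by omega⟩) h01)
    rcases isEmpty_or_nonempty (Fin d) with hd | hd
    · rw [Real.iSup_of_isEmpty, Real.iSup_of_isEmpty, mul_zero]
    · have hU' : ∀ i0 : Fin d, ∑ j, U i0 j = 0 := by
        intro i0
        have := congrFun hU i0
        simpa using this
      have hlamU0 : 0 ≤ ⨆ j, hUU.eigenvalues j := by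
        have hps : (U * Uᵀ).PosSemidef := by
          have hT : Uᴴ = Uᵀ := by ext i j; simp [Matrix.conjTranspose_apply]
          rw [← hT]
          exact Matrix.posSemidef_self_mul_conjTranspose U
        exact le_trans (hps.eigenvalues_nonneg (Classical.arbitrary _))
          (le_ciSup (Set.Finite.bddAbove (Set.finite_range _)) _)
      refine ciSup_le fun i => ?_
      have hquad_le_gen : ∀ z : Fin d → ℝ,
          C⁻¹ * ∑ p ∈ Ps, w p * ((u p) ⬝ᵥ z)^2
            ≤ ν * (n : ℝ) / C * ((⨆ j, hUU.eigenvalues j) * (z ⬝ᵥ z)) := by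
        intro z
        set a : Fin n → ℝ := fun j => (fun i0 => U i0 j) ⬝ᵥ z with ha
        have hadot : ∀ p : Fin n × Fin n, (u p) ⬝ᵥ z = a p.1 - a p.2 := by
          intro p
          rw [hu, ha]
          simp [sub_dotProduct]
        have hasum : ∑ j, a j = 0 := by
          rw [ha]
          simp only [dotProduct]
          rw [Finset.sum_comm]
          simp only [← Finset.sum_mul]
          simp [hU']
        have hquadU : ∑ j, (a j)^2 = z ⬝ᵥ (U * Uᵀ) *ᵥ z := by
          rw [← Matrix.mulVec_mulVec, Matrix.dotProduct_mulVec, ← Matrix.mulVec_transpose]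
          simp only [dotProduct, Matrix.mulVec, dotProduct,
            Matrix.transpose_apply, ha, sq]
        have hid : ∑ p ∈ Ps, ((u p) ⬝ᵥ z)^2 = n * (z ⬝ᵥ (U * Uᵀ) *ᵥ z) := by
          rw [← hquadU, ← pair_sum_id a hasum, hPs]
          exact Finset.sum_congr rfl fun p _ => by rw [hadot]
        have hquad_le := quad_le_top_eig hUU z
        calc C⁻¹ * ∑ p ∈ Ps, w p * ((u p) ⬝ᵥ z)^2
            ≤ C⁻¹ * ∑ p ∈ Ps, ν * ((u p) ⬝ᵥ z)^2 := by
              refine mul_le_mul_of_nonneg_left (Finset.sum_le_sum fun p hp => ?_)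
                (inv_nonneg.mpr hCpos.le)
              refine mul_le_mul_of_nonneg_right ?_ (sq_nonneg _)
              exact hν p (by simpa [hPs] using hp)
          _ = C⁻¹ * (ν * (n * (z ⬝ᵥ (U * Uᵀ) *ᵥ z))) := by
              rw [← Finset.mul_sum, hid]
          _ ≤ C⁻¹ * (ν * (n * ((⨆ j, hUU.eigenvalues j) * (z ⬝ᵥ z)))) := by
              refine mul_le_mul_of_nonneg_left (mul_le_mul_of_nonneg_left
                (mul_le_mul_of_nonneg_left hquad_le (by positivity)) hν0)
                (inv_nonneg.mpr hCpos.le)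
          _ = ν * (n : ℝ) / C * ((⨆ j, hUU.eigenvalues j) * (z ⬝ᵥ z)) := by
              field_simp
      have hx1 : (⇑(hA.eigenvectorBasis i) : Fin d → ℝ) ⬝ᵥ ⇑(hA.eigenvectorBasis i) = 1 :=
        eigvec_unit hA i
      calc hA.eigenvalues i
          = (⇑(hA.eigenvectorBasis i) : Fin d → ℝ) ⬝ᵥ A *ᵥ ⇑(hA.eigenvectorBasis i) :=
            eig_eq_quad hA i
        _ = C⁻¹ * ∑ p ∈ Ps, w p * ((u p) ⬝ᵥ ⇑(hA.eigenvectorBasis i))^2 := key _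
        _ ≤ ν * (n : ℝ) / C * ((⨆ j, hUU.eigenvalues j)
              * ((⇑(hA.eigenvectorBasis i) : Fin d → ℝ) ⬝ᵥ ⇑(hA.eigenvectorBasis i))) :=
            hquad_le_gen _
        _ = ν * (n : ℝ) / C * ⨆ j, hUU.eigenvalues j := by rw [hx1, mul_one]


/-- For centered `U` with `‖U_i − U_j‖₂² ≤ ν` on all pairs, the
largest eigenvalue of `(1/C(n,2)) Σ_{i<j} ‖U_i−U_j‖₂² (U_i−U_j)(U_i−U_j)ᵀ` is at
most `(νn/C(n,2)) · λ_max(U Uᵀ)`. -/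
theorem stmt12 {d n : ℕ} (U : Matrix (Fin d) (Fin n) ℝ) (ν : ℝ)
    (hU : ∑ j : Fin n, (fun i => U i j) = (0 : Fin d → ℝ))
    (hν : ∀ p : Fin n × Fin n, p.1 < p.2 → ∑ i, (U i p.1 - U i p.2) ^ 2 ≤ ν)
    (hM : (((n.choose 2 : ℝ))⁻¹ •
        ∑ p ∈ Finset.univ.filter (fun p : Fin n × Fin n => p.1 < p.2),
          (∑ i, (U i p.1 - U i p.2) ^ 2) •
            vecMulVec ((fun i => U i p.1) - fun i => U i p.2)
              ((fun i => U i p.1) - fun i => U i p.2)).IsHermitian)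
    (hUU : (U * Uᵀ).IsHermitian) :
    (⨆ i, hM.eigenvalues i)
      ≤ ν * (n : ℝ) / (n.choose 2 : ℝ) * ⨆ i, hUU.eigenvalues i := by
  exact stmt12_aux U ν hU hν rfl hM hUU
end
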